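/- Let B be the color-set gadget for integers r ≥ 2, 1 ≤ m ≤ r, a proper subset C ⊊ {1,…,r} with |C| ≤ m, and ℓ = r − |C|. Then: (i) every r-deletion set Y of B satisfies |Y ∖ (U ∪ F)| ≥ ℓ + 1; (ii) if Y is an r-deletion set of B with Y ∩ F = ∅ and |Y ∖ (U ∪ F)| = ℓ + 1, and φ is a proper r-coloring of B − Y with φ(f_s) = s for all s ∈ {1,…,r}, then v ∈ Y implies φ(u) ∈ C for every u ∈ U ∖ Y. -/

import Mathlib

/-- Vertex set of the color-set gadget: `U` (a set of `m ≤ r` true twins), the head vertex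
`v`, vertices `w_1, …, w_{2ℓ+1}` (0-indexed: `w i` is `w_{i+1}`), the central clique
`F = {f_1, …, f_r}` (0-indexed), a set `D_0` of `r - 1` vertices, and for each `i ∈ [ℓ]`
a set `D_i` of `r - 1` vertices. -/
inductive BV (r m l : ℕ) : Type where
  | u (i : Fin m)
  | v
  | w (i : Fin (2 * l + 1))
  | f (s : Fin r)
  | d0 (i : Fin (r - 1))
  | d (i : Fin l) (j : Fin (r - 1))

/-- The edges of the color-set gadget (as a relation, to be symmetrized), where
`cbar : Fin ℓ → Fin r` enumerates `[r] ∖ C` (so `cbar i` is `c̄_{i+1}`); 0-indexed: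
`w_{2i-1}` is `w (2*i0)` and `w_{2i}` is `w (2*i0+1)` for `i0 = i - 1`, and `w_{2ℓ+1}`
is `w (2*l)`; `f_1` is `f s` with `s.val = 0`. -/
def BRel (r m l : ℕ) (cbar : Fin l → Fin r) : BV r m l → BV r m l → Prop
  | .u _, .u _ => True
  | .f _, .f _ => True
  | .w i, .u _ => (i : ℕ) % 2 = 0 ∧ (i : ℕ) < 2 * l
  | .w i, .w j =>
      ((i : ℕ) % 2 = 0 ∧ (i : ℕ) < 2 * l ∧ (j : ℕ) = (i : ℕ) + 1) ∨
      ((i : ℕ) % 2 = 1 ∧ (j : ℕ) = 2 * l)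
  | .w i, .d i0 _ => (i : ℕ) = 2 * (i0 : ℕ) ∨ (i : ℕ) = 2 * (i0 : ℕ) + 1
  | .d i0 j, .d i0' j' => i0 = i0' ∧ j ≠ j'
  | .w i, .f s =>
      (∃ i0 : Fin l, (i : ℕ) = 2 * (i0 : ℕ) ∧ s ≠ cbar i0) ∨
      (((i : ℕ) % 2 = 1 ∨ (i : ℕ) = 2 * l) ∧ (s : ℕ) ≠ 0)
  | .w i, .v => (i : ℕ) = 2 * l
  | .w i, .d0 _ => (i : ℕ) = 2 * l
  | .v, .d0 _ => True
  | .d0 j, .d0 j' => j ≠ j'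
  | _, _ => False

/-- The color-set gadget `B = B_C(U, v)`. -/
def colorSetGadget (r m l : ℕ) (cbar : Fin l → Fin r) : SimpleGraph (BV r m l) :=
  SimpleGraph.fromRel (BRel r m l cbar)

/-- For the color-set gadget `B` (with `r ≥ 2`, `1 ≤ m ≤ r`,
`C ⊊ [r]`, `|C| ≤ m`, `ℓ = r − |C|`):
(i) every `r`-deletion set `Y` of `B` satisfies `|Y ∖ (U ∪ F)| ≥ ℓ + 1`;
(ii) if `Y` is an `r`-deletion set with `Y ∩ F = ∅` and `|Y ∖ (U ∪ F)| = ℓ + 1`, and `φ`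
is a proper `r`-coloring of `B − Y` with `φ(f_s) = s` for all `s`, then `v ∈ Y` implies
`φ(u) ∈ C` for every `u ∈ U ∖ Y`. -/
-- auxiliary defs
def BVenc (r m l : ℕ) : BV r m l → (Fin m ⊕ Unit ⊕ Fin (2*l+1) ⊕ Fin r ⊕ Fin (r-1) ⊕ Fin l × Fin (r-1))
  | .u i => Sum.inl i
  | .v => Sum.inr (Sum.inl ())
  | .w i => Sum.inr (Sum.inr (Sum.inl i))
  | .f s => Sum.inr (Sum.inr (Sum.inr (Sum.inl s)))
  | .d0 i => Sum.inr (Sum.inr (Sum.inr (Sum.inr (Sum.inl i))))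
  | .d i j => Sum.inr (Sum.inr (Sum.inr (Sum.inr (Sum.inr (i, j)))))

instance (r m l : ℕ) : Finite (BV r m l) :=
  Finite.of_injective (BVenc r m l)
    (by intro a b h; cases a <;> cases b <;> simp_all [BVenc])

def BVtag (r m l : ℕ) : BV r m l → ℕ
  | .w i => if (i : ℕ) = 2 * l then 0 else (i : ℕ) / 2 + 1
  | .d i _ => (i : ℕ) + 1
  | _ => 0

lemma gadget_adj {r m l : ℕ} {cbar : Fin l → Fin r} {x y : BV r m l} :
    (colorSetGadget r m l cbar).Adj x y ↔
      x ≠ y ∧ (BRel r m l cbar x y ∨ BRel r m l cbar y x) :=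
  SimpleGraph.fromRel_adj _ x y

lemma induce_adj' {V : Type*} {G : SimpleGraph V} {s : Set V} {x y : V}
    (hx : x ∈ s) (hy : y ∈ s) (h : G.Adj x y) : (G.induce s).Adj ⟨x, hx⟩ ⟨y, hy⟩ := h

lemma clique_hit {r m l : ℕ} (hr : 2 ≤ r) {cbar : Fin l → Fin r} (Y : Set (BV r m l))
    (φ : ((colorSetGadget r m l cbar).induce Yᶜ).Coloring (Fin r))
    (a b : BV r m l) (dj : Fin (r-1) → BV r m l)
    (hab : (colorSetGadget r m l cbar).Adj a b)
    (had : ∀ j, (colorSetGadget r m l cbar).Adj a (dj j))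
    (hbd : ∀ j, (colorSetGadget r m l cbar).Adj b (dj j))
    (hdd : ∀ j j', j ≠ j' → (colorSetGadget r m l cbar).Adj (dj j) (dj j')) :
    a ∈ Y ∨ b ∈ Y ∨ ∃ j, dj j ∈ Y := by
  by_contra h
  push_neg at h
  obtain ⟨ha, hb, hd⟩ := h
  have key : ∀ (x y : BV r m l) (hx : x ∈ Yᶜ) (hy : y ∈ Yᶜ),
      (colorSetGadget r m l cbar).Adj x y → φ ⟨x, hx⟩ ≠ φ ⟨y, hy⟩ :=
    fun x y hx hy hxy => φ.valid (induce_adj' hx hy hxy)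
  let e : Fin (r-1) ⊕ Bool → Fin r := fun x =>
    match x with
    | Sum.inl j => φ ⟨dj j, hd j⟩
    | Sum.inr true => φ ⟨a, ha⟩
    | Sum.inr false => φ ⟨b, hb⟩
  have einj : Function.Injective e := by
    rintro (j | bx) (j' | by') hxy
    · by_contra hne
      exact key _ _ (hd j) (hd j') (hdd j j' (by simpa using hne)) hxy
    · cases by' <;> exact absurd hxy.symm
        (by first
          | exact key _ _ ha (hd j) (had j)
          | exact key _ _ hb (hd j) (hbd j))
    · cases bx <;> exact absurd hxy
        (by first
          | exact key _ _ ha (hd j') (had j')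
          | exact key _ _ hb (hd j') (hbd j'))
    · cases bx <;> cases by' <;> first
        | rfl
        | exact absurd hxy (key _ _ _ _ hab)
        | exact absurd hxy (key _ _ _ _ hab.symm)
  have := Fintype.card_le_of_injective e einj
  simp [Fintype.card_sum] at this
  omega
section Cliques
variable {r m l : ℕ} {cbar : Fin l → Fin r}

lemma wA_lt (i0 : Fin l) : 2 * (i0 : ℕ) < 2 * l + 1 := by have := i0.isLt; omega
lemma wB_lt (i0 : Fin l) : 2 * (i0 : ℕ) + 1 < 2 * l + 1 := by have := i0.isLt; omega

lemma adj_v_w2l : (colorSetGadget r m l cbar).Adj BV.v (BV.w ⟨2*l, by omega⟩) :=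
  gadget_adj.mpr ⟨by simp, Or.inr (show (2*l : ℕ) = 2*l from rfl)⟩

lemma adj_v_d0 (j : Fin (r-1)) : (colorSetGadget r m l cbar).Adj BV.v (BV.d0 j) :=
  gadget_adj.mpr ⟨by simp, Or.inl trivial⟩

lemma adj_w2l_d0 (j : Fin (r-1)) :
    (colorSetGadget r m l cbar).Adj (BV.w ⟨2*l, by omega⟩) (BV.d0 j) :=
  gadget_adj.mpr ⟨by simp, Or.inl (show (2*l : ℕ) = 2*l from rfl)⟩

lemma adj_d0_d0 {j j' : Fin (r-1)} (h : j ≠ j') :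
    (colorSetGadget r m l cbar).Adj (BV.d0 j) (BV.d0 j') :=
  gadget_adj.mpr ⟨by simp [h], Or.inl h⟩

lemma adj_wA_wB (i0 : Fin l) :
    (colorSetGadget r m l cbar).Adj (BV.w ⟨2*i0, wA_lt i0⟩) (BV.w ⟨2*i0+1, wB_lt i0⟩) :=
  gadget_adj.mpr ⟨by simp, Or.inl (Or.inl ⟨show 2*(i0:ℕ) % 2 = 0 by omega,
    show 2*(i0:ℕ) < 2*l by have := i0.isLt; omega, rfl⟩)⟩

lemma adj_wA_d (i0 : Fin l) (j : Fin (r-1)) :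
    (colorSetGadget r m l cbar).Adj (BV.w ⟨2*i0, wA_lt i0⟩) (BV.d i0 j) :=
  gadget_adj.mpr ⟨by simp, Or.inl (Or.inl rfl)⟩

lemma adj_wB_d (i0 : Fin l) (j : Fin (r-1)) :
    (colorSetGadget r m l cbar).Adj (BV.w ⟨2*i0+1, wB_lt i0⟩) (BV.d i0 j) :=
  gadget_adj.mpr ⟨by simp, Or.inl (Or.inr rfl)⟩

lemma adj_d_d (i0 : Fin l) {j j' : Fin (r-1)} (h : j ≠ j') :
    (colorSetGadget r m l cbar).Adj (BV.d i0 j) (BV.d i0 j') :=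
  gadget_adj.mpr ⟨by simp [h], Or.inl ⟨rfl, h⟩⟩

lemma adj_wB_w2l (i0 : Fin l) :
    (colorSetGadget r m l cbar).Adj (BV.w ⟨2*i0+1, wB_lt i0⟩) (BV.w ⟨2*l, by omega⟩) := by
  refine gadget_adj.mpr ⟨?_, Or.inl (Or.inr ⟨show (2*(i0:ℕ)+1) % 2 = 1 by omega, rfl⟩)⟩
  have := i0.isLt
  simp only [ne_eq, BV.w.injEq, Fin.mk.injEq]
  omega

lemma adj_w2l_f {s : Fin r} (hs : (s : ℕ) ≠ 0) :
    (colorSetGadget r m l cbar).Adj (BV.w ⟨2*l, by omega⟩) (BV.f s) :=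
  gadget_adj.mpr ⟨by simp, Or.inl (Or.inr ⟨Or.inr rfl, hs⟩)⟩

lemma adj_wB_f (i0 : Fin l) {s : Fin r} (hs : (s : ℕ) ≠ 0) :
    (colorSetGadget r m l cbar).Adj (BV.w ⟨2*i0+1, wB_lt i0⟩) (BV.f s) :=
  gadget_adj.mpr ⟨by simp, Or.inl (Or.inr ⟨Or.inl (show (2*(i0:ℕ)+1) % 2 = 1 by omega), hs⟩)⟩

lemma adj_wA_f (i0 : Fin l) {s : Fin r} (hs : s ≠ cbar i0) :
    (colorSetGadget r m l cbar).Adj (BV.w ⟨2*i0, wA_lt i0⟩) (BV.f s) :=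
  gadget_adj.mpr ⟨by simp, Or.inl (Or.inl ⟨i0, rfl, hs⟩)⟩

lemma adj_wA_u (i0 : Fin l) (i : Fin m) :
    (colorSetGadget r m l cbar).Adj (BV.w ⟨2*i0, wA_lt i0⟩) (BV.u i) :=
  gadget_adj.mpr ⟨by simp, Or.inl ⟨show 2*(i0:ℕ) % 2 = 0 by omega,
    show 2*(i0:ℕ) < 2*l by have := i0.isLt; omega⟩⟩

lemma tag_v : BVtag r m l BV.v = 0 := rfl
lemma tag_d0 (j : Fin (r-1)) : BVtag r m l (BV.d0 j) = 0 := rfl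
lemma tag_w2l : BVtag r m l (BV.w ⟨2*l, by omega⟩) = 0 := by
  show (if 2*l = 2*l then 0 else 2*l/2+1) = 0
  simp

lemma tag_wA (i0 : Fin l) : BVtag r m l (BV.w ⟨2*i0, wA_lt i0⟩) = (i0 : ℕ) + 1 := by
  show (if 2*(i0:ℕ) = 2*l then 0 else 2*(i0:ℕ)/2+1) = (i0:ℕ)+1
  have := i0.isLt
  rw [if_neg (by omega)]
  omega

lemma tag_wB (i0 : Fin l) : BVtag r m l (BV.w ⟨2*i0+1, wB_lt i0⟩) = (i0 : ℕ) + 1 := by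
  show (if 2*(i0:ℕ)+1 = 2*l then 0 else (2*(i0:ℕ)+1)/2+1) = (i0:ℕ)+1
  have := i0.isLt
  rw [if_neg (by omega)]
  omega

lemma tag_d (i0 : Fin l) (j : Fin (r-1)) : BVtag r m l (BV.d i0 j) = (i0 : ℕ) + 1 := rfl

lemma tag_image (hr : 2 ≤ r) (Y : Set (BV r m l))
    (φ : ((colorSetGadget r m l cbar).induce Yᶜ).Coloring (Fin r)) :
    ↑(Finset.range (l+1)) ⊆ BVtag r m l ''
      (Y \ (Set.range (fun i : Fin m => (BV.u i : BV r m l)) ∪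
        Set.range (fun s : Fin r => (BV.f s : BV r m l)))) := by
  intro k hk
  simp only [Finset.coe_range, Set.mem_Iio] at hk
  rcases k with _ | k'
  · rcases clique_hit hr Y φ BV.v (BV.w ⟨2*l, by omega⟩) (fun j => BV.d0 j)
      adj_v_w2l adj_v_d0 adj_w2l_d0 (fun _ _ h => adj_d0_d0 h) with h | h | ⟨j, h⟩
    · exact ⟨BV.v, ⟨h, by simp⟩, tag_v⟩
    · exact ⟨_, ⟨h, by simp⟩, tag_w2l⟩
    · exact ⟨_, ⟨h, by simp⟩, tag_d0 j⟩
  · have hk' : k' < l := by omega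
    rcases clique_hit hr Y φ (BV.w ⟨2*(⟨k', hk'⟩ : Fin l), wA_lt _⟩)
      (BV.w ⟨2*(⟨k', hk'⟩ : Fin l)+1, wB_lt _⟩)
      (fun j => BV.d ⟨k', hk'⟩ j) (adj_wA_wB _) (adj_wA_d _) (adj_wB_d _)
      (fun _ _ h => adj_d_d _ h) with h | h | ⟨j, h⟩
    · exact ⟨_, ⟨h, by simp⟩, tag_wA ⟨k', hk'⟩⟩
    · exact ⟨_, ⟨h, by simp⟩, tag_wB ⟨k', hk'⟩⟩
    · exact ⟨_, ⟨h, by simp⟩, tag_d ⟨k', hk'⟩ j⟩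

end Cliques
theorem stmt_9 (r m : ℕ) (hr : 2 ≤ r) (hm1 : 1 ≤ m) (hmr : m ≤ r)
    (C : Finset (Fin r)) (hC : C ≠ Finset.univ) (hCm : C.card ≤ m)
    (l : ℕ) (hl : l = r - C.card)
    (cbar : Fin l → Fin r) (hinj : Function.Injective cbar)
    (hmem : ∀ i, cbar i ∉ C) :
    (∀ Y : Set (BV r m l),
        ((colorSetGadget r m l cbar).induce Yᶜ).Colorable r →
        l + 1 ≤ (Y \ (Set.range (fun i : Fin m => (BV.u i : BV r m l)) ∪
          Set.range (fun s : Fin r => (BV.f s : BV r m l)))).ncard) ∧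
    (∀ (Y : Set (BV r m l))
        (φ : ((colorSetGadget r m l cbar).induce Yᶜ).Coloring (Fin r)),
        (∀ s : Fin r, (BV.f s : BV r m l) ∉ Y) →
        (Y \ (Set.range (fun i : Fin m => (BV.u i : BV r m l)) ∪
          Set.range (fun s : Fin r => (BV.f s : BV r m l)))).ncard = l + 1 →
        (∀ (s : Fin r) (h : (BV.f s : BV r m l) ∈ Yᶜ), φ ⟨BV.f s, h⟩ = s) →
        (BV.v : BV r m l) ∈ Y →
        ∀ (i : Fin m) (h : (BV.u i : BV r m l) ∈ Yᶜ), φ ⟨BV.u i, h⟩ ∈ C) := by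
  have lower : ∀ (Y : Set (BV r m l))
      (φ : ((colorSetGadget r m l cbar).induce Yᶜ).Coloring (Fin r)),
      l + 1 ≤ (Y \ (Set.range (fun i : Fin m => (BV.u i : BV r m l)) ∪
        Set.range (fun s : Fin r => (BV.f s : BV r m l)))).ncard := by
    intro Y φ
    set T := Y \ (Set.range (fun i : Fin m => (BV.u i : BV r m l)) ∪
      Set.range (fun s : Fin r => (BV.f s : BV r m l))) with hT
    have hTfin : T.Finite := Set.toFinite _
    calc l + 1 = (↑(Finset.range (l+1)) : Set ℕ).ncard := by
          rw [Set.ncard_coe_finset, Finset.card_range]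
      _ ≤ (BVtag r m l '' T).ncard :=
          Set.ncard_le_ncard (tag_image hr Y φ) (hTfin.image _)
      _ ≤ T.ncard := Set.ncard_image_le hTfin
  constructor
  · intro Y hcol
    obtain ⟨φ⟩ := hcol
    exact lower Y φ
  · intro Y φ hYF hcard hφf hv
    set T := Y \ (Set.range (fun i : Fin m => (BV.u i : BV r m l)) ∪
      Set.range (fun s : Fin r => (BV.f s : BV r m l))) with hT
    have hTfin : T.Finite := Set.toFinite _
    -- injectivity of the tag on T
    have hinjOn : Set.InjOn (BVtag r m l) T := by
      apply Set.injOn_of_ncard_image_eq _ hTfin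
      have h1 : (BVtag r m l '' T).ncard ≤ T.ncard := Set.ncard_image_le hTfin
      have h2 : l + 1 ≤ (BVtag r m l '' T).ncard := by
        calc l + 1 = (↑(Finset.range (l+1)) : Set ℕ).ncard := by
              rw [Set.ncard_coe_finset, Finset.card_range]
          _ ≤ (BVtag r m l '' T).ncard :=
              Set.ncard_le_ncard (tag_image hr Y φ) (hTfin.image _)
      omega
    have hvT : (BV.v : BV r m l) ∈ T := ⟨hv, by simp⟩
    have hvalid : ∀ (x y : BV r m l) (hx : x ∈ Yᶜ) (hy : y ∈ Yᶜ),
        (colorSetGadget r m l cbar).Adj x y → φ ⟨x, hx⟩ ≠ φ ⟨y, hy⟩ :=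
      fun x y hx hy hxy => φ.valid (induce_adj' hx hy hxy)
    -- any vertex adjacent to all f s with s ≠ c0 gets color c0
    have hforce : ∀ (x : BV r m l) (hx : x ∈ Yᶜ) (c0 : Fin r),
        (∀ s : Fin r, s ≠ c0 → (colorSetGadget r m l cbar).Adj x (BV.f s)) → φ ⟨x, hx⟩ = c0 := by
      intro x hx c0 hadj
      by_contra hc
      exact hvalid x (BV.f (φ ⟨x, hx⟩)) hx (hYF _) (hadj _ hc)
        (by rw [hφf _ (hYF _)])
    -- w_{2l+1} is not deleted
    have hw2l : (BV.w ⟨2*l, by omega⟩ : BV r m l) ∉ Y := by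
      intro h
      have h2 : (BV.w ⟨2*l, by omega⟩ : BV r m l) ∈ T := ⟨h, by simp⟩
      have := hinjOn hvT h2 (by rw [tag_v, tag_w2l])
      cases this
    -- its color is 0
    have hc0 : (0 : ℕ) < r := by omega
    have hφw2l : φ ⟨BV.w ⟨2*l, by omega⟩, hw2l⟩ = ⟨0, hc0⟩ := by
      apply hforce
      intro s hs
      exact adj_w2l_f (fun h => hs (Fin.ext h))
    -- all w_{2i} are deleted
    have hwB : ∀ i0 : Fin l, (BV.w ⟨2*i0+1, wB_lt i0⟩ : BV r m l) ∈ Y := by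
      intro i0
      by_contra hB
      have hφB : φ ⟨BV.w ⟨2*i0+1, wB_lt i0⟩, hB⟩ = ⟨0, hc0⟩ := by
        apply hforce
        intro s hs
        exact adj_wB_f i0 (fun h => hs (Fin.ext h))
      have := hvalid _ _ hB hw2l (adj_wB_w2l i0)
      rw [hφB, hφw2l] at this
      exact this rfl
    -- all w_{2i-1} are not deleted
    have hwA : ∀ i0 : Fin l, (BV.w ⟨2*i0, wA_lt i0⟩ : BV r m l) ∉ Y := by
      intro i0 h
      have h1 : (BV.w ⟨2*i0, wA_lt i0⟩ : BV r m l) ∈ T := ⟨h, by simp⟩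
      have h2 : (BV.w ⟨2*i0+1, wB_lt i0⟩ : BV r m l) ∈ T := ⟨hwB i0, by simp⟩
      have := hinjOn h1 h2 (by rw [tag_wA, tag_wB])
      simp only [BV.w.injEq, Fin.mk.injEq] at this
      omega
    -- their colors are the cbar values
    have hφwA : ∀ i0 : Fin l, φ ⟨BV.w ⟨2*i0, wA_lt i0⟩, hwA i0⟩ = cbar i0 := by
      intro i0
      exact hforce _ _ _ (fun s hs => adj_wA_f i0 hs)
    -- conclusion
    intro i h
    have hnot : ∀ i0 : Fin l, φ ⟨BV.u i, h⟩ ≠ cbar i0 := by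
      intro i0 he
      have := hvalid _ _ (hwA i0) h (adj_wA_u i0 i)
      rw [hφwA i0, he] at this
      exact this rfl
    have hrange : Finset.image cbar Finset.univ = Cᶜ := by
      apply Finset.eq_of_subset_of_card_le
      · intro x hx
        simp only [Finset.mem_image, Finset.mem_univ, true_and] at hx
        obtain ⟨i0, rfl⟩ := hx
        simpa using hmem i0
      · rw [Finset.card_compl, Finset.card_image_of_injective _ hinj]
        simp only [Finset.card_univ, Fintype.card_fin]
        omega
    by_contra hnC
    have : φ ⟨BV.u i, h⟩ ∈ Finset.image cbar Finset.univ := by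
      rw [hrange]; simpa using hnC
    simp only [Finset.mem_image, Finset.mem_univ, true_and] at this
    obtain ⟨i0, hi0⟩ := this
    exact hnot i0 hi0.symm
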